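/- With the subset-convolution ∗-product on functions from finite sets to a commutative ℚ-algebra, define Exp_∗(h)(Y) = δ_{Y,∅}·1 + ∑_{P partition of Y} ∏_{X∈P} h(X) for h with h(∅)=0, and Ln_∗(𝕀+h)(Y) = ∑_{P partition of Y} (-1)^{|P|-1}(|P|-1)! ∏_{X∈P} h(X). Then Ln_∗(Exp_∗(h)) = h for all such h; that is, the partition-sum exponential and the Möbius-type logarithm are mutually inverse. -/

import Mathlib

/-- A finset of finsets `P` is a partition of the finset `Y`. -/
def IsSetPartition {α : Type*} [DecidableEq α] (P : Finset (Finset α)) (Y : Finset α) : Prop :=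
  (∀ X ∈ P, X.Nonempty) ∧
    (∀ X ∈ P, ∀ X' ∈ P, X ≠ X' → Disjoint X X') ∧ P.sup id = Y

open scoped Classical in
/-- The finset of all set partitions of a finset `Y`. -/
noncomputable def setPartitions {α : Type*} [DecidableEq α] (Y : Finset α) :
    Finset (Finset (Finset α)) :=
  Y.powerset.powerset.filter (fun P => IsSetPartition P Y)

section Helpers
variable {α : Type*} [DecidableEq α]

lemma mem_setPartitions {P : Finset (Finset α)} {Y : Finset α} :
    P ∈ setPartitions Y ↔ IsSetPartition P Y := by
  classical
  constructor
  · intro h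
    exact (Finset.mem_filter.mp h).2
  · intro h
    refine Finset.mem_filter.mpr ⟨?_, h⟩
    rw [Finset.mem_powerset]
    intro X hX
    rw [Finset.mem_powerset]
    have : id X ≤ P.sup id := Finset.le_sup hX
    rw [h.2.2] at this
    exact this

lemma blocks_subset {P : Finset (Finset α)} {Y : Finset α} (hP : P ∈ setPartitions Y)
    {X : Finset α} (hX : X ∈ P) : X ⊆ Y := by
  have h := (mem_setPartitions.mp hP).2.2
  have : id X ≤ P.sup id := Finset.le_sup hX
  rw [h] at this
  exact this

lemma block_nonempty {P : Finset (Finset α)} {Y : Finset α} (hP : P ∈ setPartitions Y)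
    {X : Finset α} (hX : X ∈ P) : X.Nonempty :=
  (mem_setPartitions.mp hP).1 X hX

lemma empty_not_mem_setPartitions {P : Finset (Finset α)} {Y : Finset α}
    (hP : P ∈ setPartitions Y) : ∅ ∉ P := by
  intro h
  exact absurd (block_nonempty hP h) (by simp)

lemma existsUnique_block {P : Finset (Finset α)} {Y : Finset α} {a : α}
    (hP : P ∈ setPartitions Y) (ha : a ∈ Y) :
    ∃ B, (B ∈ P ∧ a ∈ B) ∧ ∀ B' ∈ P, a ∈ B' → B' = B := by
  obtain ⟨hne, hdis, hsup⟩ := mem_setPartitions.mp hP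
  have : a ∈ P.sup id := by rw [hsup]; exact ha
  rw [Finset.mem_sup] at this
  obtain ⟨B, hB, haB⟩ := this
  refine ⟨B, ⟨hB, haB⟩, ?_⟩
  intro B' hB' haB'
  by_contra hne'
  exact (Finset.disjoint_left.mp (hdis B' hB' B hB hne') haB') haB

lemma setPartitions_nonempty {P : Finset (Finset α)} {Y : Finset α}
    (hY : Y.Nonempty) (hP : P ∈ setPartitions Y) : P.Nonempty := by
  obtain ⟨a, ha⟩ := hY
  obtain ⟨B, ⟨hB, _⟩, _⟩ := existsUnique_block hP ha
  exact ⟨B, hB⟩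

lemma singleton_mem_setPartitions {Y : Finset α} (hY : Y.Nonempty) :
    {Y} ∈ setPartitions Y := by
  refine mem_setPartitions.mpr ⟨?_, ?_, ?_⟩
  · intro X hX; rw [Finset.mem_singleton] at hX; subst hX; exact hY
  · intro X hX X' hX' hne
    rw [Finset.mem_singleton] at hX hX'
    exact absurd (hX.trans hX'.symm) hne
  · exact Finset.sup_singleton

lemma eq_singleton_of_card_eq_one {P : Finset (Finset α)} {Y : Finset α}
    (hP : P ∈ setPartitions Y) (h1 : P.card = 1) : P = {Y} := by
  obtain ⟨X, rfl⟩ := Finset.card_eq_one.mp h1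
  have := (mem_setPartitions.mp hP).2.2
  rw [Finset.sup_singleton] at this
  rw [show id X = X from rfl] at this
  subst this; rfl

lemma setPartitions_empty : setPartitions (∅ : Finset α) = {∅} := by
  ext P
  rw [Finset.mem_singleton]
  constructor
  · intro hP
    obtain ⟨hne, _, hsup⟩ := mem_setPartitions.mp hP
    rw [Finset.eq_empty_iff_forall_notMem]
    intro X hX
    have h1 : X ⊆ ∅ := blocks_subset hP hX
    obtain ⟨x, hx⟩ := hne X hX
    exact absurd (h1 hx) (by simp)
  · rintro rfl
    exact mem_setPartitions.mpr ⟨by simp, by simp, by simp⟩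

lemma setPartitions_singleton (a : α) : setPartitions ({a} : Finset α) = {{{a}}} := by
  ext σ
  rw [Finset.mem_singleton]
  constructor
  · intro hσ
    obtain ⟨hne, hdis, hsup⟩ := mem_setPartitions.mp hσ
    have hall : ∀ X ∈ σ, X = {a} := by
      intro X hX
      rcases Finset.subset_singleton_iff.mp (blocks_subset hσ hX) with h | h
      · exact absurd (hne X hX) (by simp [h])
      · exact h
    have hane : ({a} : Finset α).Nonempty := ⟨a, by simp⟩
    obtain ⟨B, hB⟩ := setPartitions_nonempty hane hσ
    rw [Finset.eq_singleton_iff_unique_mem]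
    exact ⟨(hall B hB) ▸ hB, hall⟩
  · rintro rfl
    refine mem_setPartitions.mpr ⟨by simp, ?_, by simp⟩
    intro X hX X' hX' hne
    rw [Finset.mem_singleton] at hX hX'
    exact absurd (hX.trans hX'.symm) hne

lemma filter_eq_singleton {β : Type*} [DecidableEq β] {s : Finset β} {p : β → Prop}
    [DecidablePred p] {b : β} (hb : b ∈ s) (hpb : p b) (hu : ∀ x ∈ s, p x → x = b) :
    s.filter p = {b} := by
  ext x
  rw [Finset.mem_filter, Finset.mem_singleton]
  constructor
  · rintro ⟨hx, hpx⟩; exact hu x hx hpx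
  · rintro rfl; exact ⟨hb, hpb⟩

lemma sup_erase_empty (t : Finset (Finset α)) : (t.erase ∅).sup id = t.sup id := by
  ext x
  simp only [Finset.mem_sup, Finset.mem_erase, id]
  constructor
  · rintro ⟨Z, ⟨_, hZ⟩, hx⟩; exact ⟨Z, hZ, hx⟩
  · rintro ⟨Z, hZ, hx⟩; exact ⟨Z, ⟨Finset.ne_empty_of_mem hx, hZ⟩, hx⟩

lemma sup_erase_point (σ : Finset (Finset α)) (a : α) :
    (σ.sup fun X => X.erase a) = (σ.sup id).erase a := by
  ext x
  simp only [Finset.mem_sup, Finset.mem_erase, id]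
  tauto


lemma image_erase_id {α : Type*} [DecidableEq α] {σ : Finset (Finset α)} {a : α}
    (h : ∀ X ∈ σ, a ∉ X) : σ.image (fun X => X.erase a) = σ := by
  ext Z
  simp only [Finset.mem_image]
  constructor
  · rintro ⟨X, hX, rfl⟩
    rw [Finset.erase_eq_of_notMem (h X hX)]
    exact hX
  · intro hZ
    exact ⟨Z, hZ, Finset.erase_eq_of_notMem (h Z hZ)⟩

end Helpers

section Key
variable {α : Type*} [DecidableEq α] {R : Type*} [CommRing R]

lemma key_identity (S : Finset α) (hS : S.Nonempty) :
    (∑ σ ∈ setPartitions S, (-1 : R) ^ (σ.card - 1) * (σ.card - 1).factorial) =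
      if S.card = 1 then 1 else 0 := by
  by_cases h1 : S.card = 1
  · rw [if_pos h1]
    obtain ⟨a, rfl⟩ := Finset.card_eq_one.mp h1
    rw [setPartitions_singleton]
    simp
  · rw [if_neg h1]
    obtain ⟨a, ha⟩ := hS
    have hcard : 2 ≤ S.card := by
      have : 1 ≤ S.card := Finset.card_pos.mpr ⟨a, ha⟩
      omega
    set S' := S.erase a with hS'def
    have haS' : a ∉ S' := Finset.notMem_erase a S
    have hS'ne : S'.Nonempty := by
      rw [← Finset.card_pos, Finset.card_erase_of_mem ha]
      omega
    -- facts about partitions of S'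
    have hnoa : ∀ σ' ∈ setPartitions S', ∀ X ∈ σ', a ∉ X := by
      intro σ' hσ' X hX hax
      exact haS' (blocks_subset hσ' hX hax)
    -- the index set
    set Sg := (setPartitions S').sigma (fun σ' => insert (∅ : Finset α) σ') with hSg
    set jmap : ((_ : Finset (Finset α)) × Finset α) → Finset (Finset α) :=
      fun p => if p.2 = ∅ then insert {a} p.1 else insert (insert a p.2) (p.1.erase p.2)
      with hjmap
    set imap : Finset (Finset α) → ((_ : Finset (Finset α)) × Finset α) :=
      fun σ => ⟨(σ.image (fun X => X.erase a)).erase ∅,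
        ((σ.filter (fun X => a ∈ X)).sup id).erase a⟩ with himap
    have hj : ∀ p ∈ Sg, jmap p ∈ setPartitions S := by
      rintro ⟨σ', C⟩ hp
      rw [hSg, Finset.mem_sigma] at hp
      obtain ⟨hσ', hC⟩ := hp
      dsimp only at hσ' hC ⊢
      obtain ⟨hne', hdis', hsup'⟩ := mem_setPartitions.mp hσ'
      rw [Finset.mem_insert] at hC
      rcases hC with rfl | hC
      · -- C = ∅
        simp only [hjmap, if_pos rfl]
        refine mem_setPartitions.mpr ⟨?_, ?_, ?_⟩
        · intro X hX
          rcases Finset.mem_insert.mp hX with h | h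
          · subst h; exact ⟨a, by simp⟩
          · exact hne' X h
        · intro X hX X' hX' hne
          rcases Finset.mem_insert.mp hX with h | h
          · rcases Finset.mem_insert.mp hX' with h' | h'
            · exact absurd (h.trans h'.symm) hne
            · subst h
              exact Finset.disjoint_singleton_left.mpr (hnoa σ' hσ' X' h')
          · rcases Finset.mem_insert.mp hX' with h' | h'
            · subst h'
              exact Finset.disjoint_singleton_right.mpr (hnoa σ' hσ' X h)
            · exact hdis' X h X' h' hne
        · rw [Finset.sup_insert, hsup']
          rw [show id ({a} : Finset α) = {a} from rfl, Finset.sup_eq_union,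
            ← Finset.insert_eq, hS'def, Finset.insert_erase ha]
      · -- C ∈ σ'
        have hCne : C ≠ ∅ := Finset.nonempty_iff_ne_empty.mp (hne' C hC)
        simp only [hjmap, if_neg hCne]
        have haC : a ∉ C := hnoa σ' hσ' C hC
        refine mem_setPartitions.mpr ⟨?_, ?_, ?_⟩
        · intro X hX
          rcases Finset.mem_insert.mp hX with h | h
          · subst h; exact ⟨a, Finset.mem_insert_self a C⟩
          · exact hne' X (Finset.mem_of_mem_erase h)
        · intro X hX X' hX' hne
          rcases Finset.mem_insert.mp hX with h | h
          · rcases Finset.mem_insert.mp hX' with h' | h'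
            · exact absurd (h.trans h'.symm) hne
            · subst h
              rw [Finset.disjoint_insert_left]
              refine ⟨hnoa σ' hσ' X' (Finset.mem_of_mem_erase h'), ?_⟩
              exact hdis' C hC X' (Finset.mem_of_mem_erase h') (Finset.ne_of_mem_erase h').symm
          · rcases Finset.mem_insert.mp hX' with h' | h'
            · subst h'
              rw [Finset.disjoint_insert_right]
              refine ⟨hnoa σ' hσ' X (Finset.mem_of_mem_erase h), ?_⟩
              exact (hdis' C hC X (Finset.mem_of_mem_erase h) (Finset.ne_of_mem_erase h).symm).symm
            · exact hdis' X (Finset.mem_of_mem_erase h) X' (Finset.mem_of_mem_erase h') hne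
        · rw [Finset.sup_insert]
          have hkey : σ'.sup id = C ⊔ (σ'.erase C).sup id := by
            conv_lhs => rw [← Finset.insert_erase hC]
            rw [Finset.sup_insert]
            rfl
          rw [show id (insert a C) = insert a C from rfl, Finset.sup_eq_union,
            Finset.insert_union, ← Finset.sup_eq_union, ← hkey, hsup', hS'def,
            Finset.insert_erase ha]
    have hi : ∀ σ ∈ setPartitions S, imap σ ∈ Sg := by
      intro σ hσ
      obtain ⟨hne, hdis, hsup⟩ := mem_setPartitions.mp hσ
      obtain ⟨B, ⟨hB, haB⟩, hBu⟩ := existsUnique_block hσ ha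
      have hfil : σ.filter (fun X => a ∈ X) = {B} :=
        filter_eq_singleton hB haB (fun X hX hax => hBu X hX hax)
      rw [hSg, Finset.mem_sigma]
      constructor
      · -- first component is a partition of S'
        refine mem_setPartitions.mpr ⟨?_, ?_, ?_⟩
        · intro X hX
          rw [Finset.mem_erase] at hX
          exact Finset.nonempty_iff_ne_empty.mpr hX.1
        · intro Z hZ Z' hZ' hne'
          rw [Finset.mem_erase, Finset.mem_image] at hZ hZ'
          obtain ⟨X, hX, rfl⟩ := hZ.2
          obtain ⟨X', hX', rfl⟩ := hZ'.2
          have hXX' : X ≠ X' := by rintro rfl; exact hne' rfl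
          exact Finset.disjoint_of_subset_left (Finset.erase_subset a X)
            (Finset.disjoint_of_subset_right (Finset.erase_subset a X') (hdis X hX X' hX' hXX'))
        · rw [sup_erase_empty, Finset.sup_image, Function.id_comp, sup_erase_point, hsup]
      · -- second component
        simp only [himap]
        rw [hfil, Finset.sup_singleton, show id B = B from rfl]
        by_cases hBa : B = {a}
        · subst hBa
          simp
        · have hBerase : B.erase a ≠ ∅ := by
            intro h
            rcases (Finset.erase_eq_empty_iff B a).mp h with h' | h'
            · exact absurd (hne B hB) (by simp [h'])
            · exact hBa h'
          refine Finset.mem_insert.mpr (Or.inr ?_)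
          rw [Finset.mem_erase]
          exact ⟨hBerase, Finset.mem_image.mpr ⟨B, hB, rfl⟩⟩
    have left_inv : ∀ p ∈ Sg, imap (jmap p) = p := by
      rintro ⟨σ', C⟩ hp
      rw [hSg, Finset.mem_sigma] at hp
      obtain ⟨hσ', hC⟩ := hp
      dsimp only at hσ' hC
      have hempty : (∅ : Finset α) ∉ σ' := empty_not_mem_setPartitions hσ'
      have himg2 : σ'.image (fun X => X.erase a) = σ' :=
        image_erase_id (fun X hX => hnoa σ' hσ' X hX)
      rw [Finset.mem_insert] at hC
      rcases hC with rfl | hC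
      · -- C = ∅
        have hja : jmap ⟨σ', ∅⟩ = insert {a} σ' := by simp [hjmap]
        rw [hja]
        have hfil : (insert ({a} : Finset α) σ').filter (fun X => a ∈ X) = {({a} : Finset α)} := by
          apply filter_eq_singleton (p := fun X => a ∈ X) (Finset.mem_insert_self _ _) (by simp)
          intro X hX hax
          rcases Finset.mem_insert.mp hX with h | h
          · exact h
          · exact absurd hax (hnoa σ' hσ' X h)
        simp only [himap]
        rw [hfil, Finset.sup_singleton, Finset.image_insert, himg2,
          show ({a} : Finset α).erase a = ∅ from Finset.erase_singleton a,
          Finset.erase_insert hempty]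
        simp
      · -- C ∈ σ'
        have hCne : C ≠ ∅ := Finset.nonempty_iff_ne_empty.mp (block_nonempty hσ' hC)
        have haC : a ∉ C := hnoa σ' hσ' C hC
        have hja : jmap ⟨σ', C⟩ = insert (insert a C) (σ'.erase C) := by
          simp [hjmap, hCne]
        rw [hja]
        have hfil : (insert (insert a C) (σ'.erase C)).filter (fun X => a ∈ X)
            = {insert a C} := by
          apply filter_eq_singleton (p := fun X => a ∈ X) (Finset.mem_insert_self _ _) (Finset.mem_insert_self a C)
          intro X hX hax
          rcases Finset.mem_insert.mp hX with h | h
          · exact h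
          · exact absurd hax (hnoa σ' hσ' X (Finset.mem_of_mem_erase h))
        have himg3 : (σ'.erase C).image (fun X => X.erase a) = σ'.erase C :=
          image_erase_id (fun X hX => hnoa σ' hσ' X (Finset.mem_of_mem_erase hX))
        simp only [himap]
        rw [hfil, Finset.sup_singleton, Finset.image_insert, himg3,
          show (insert a C).erase a = C from Finset.erase_insert haC,
          Finset.insert_erase hC,
          Finset.erase_eq_of_notMem hempty]
        simp
        all_goals exact haC
    have right_inv : ∀ σ ∈ setPartitions S, jmap (imap σ) = σ := by
      intro σ hσ
      obtain ⟨hne, hdis, hsup⟩ := mem_setPartitions.mp hσ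
      obtain ⟨B, ⟨hB, haB⟩, hBu⟩ := existsUnique_block hσ ha
      have hfil : σ.filter (fun X => a ∈ X) = {B} :=
        filter_eq_singleton hB haB (fun X hX hax => hBu X hX hax)
      have hempty : (∅ : Finset α) ∉ σ := empty_not_mem_setPartitions hσ
      have hnoa2 : ∀ X ∈ σ, X ≠ B → a ∉ X := by
        intro X hX hXB hax
        exact hXB (hBu X hX hax)
      have himap_eq : imap σ = ⟨(σ.image (fun X => X.erase a)).erase ∅, B.erase a⟩ := by
        simp only [himap]
        rw [hfil, Finset.sup_singleton]
        rfl
      rw [himap_eq]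
      by_cases hBa : B = {a}
      · subst hBa
        have hC0 : ({a} : Finset α).erase a = ∅ := Finset.erase_singleton a
        have himg : σ.image (fun X => X.erase a) = insert ∅ (σ.erase {a}) := by
          conv_lhs => rw [← Finset.insert_erase hB]
          rw [Finset.image_insert, hC0]
          congr 1
          exact image_erase_id
            (fun X hX => hnoa2 X (Finset.mem_of_mem_erase hX) (Finset.ne_of_mem_erase hX))
        have hja : jmap ⟨(σ.image (fun X => X.erase a)).erase ∅, (∅ : Finset α)⟩
            = insert {a} ((σ.image (fun X => X.erase a)).erase ∅) := by
          simp [hjmap]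
        rw [hC0, hja, himg, Finset.erase_insert (fun h => hempty (Finset.mem_of_mem_erase h)),
          Finset.insert_erase hB]
      · have hBerase : B.erase a ≠ ∅ := by
          intro h
          rcases (Finset.erase_eq_empty_iff B a).mp h with h' | h'
          · exact absurd (hne B hB) (by simp [h'])
          · exact hBa h'
        have himg : σ.image (fun X => X.erase a) = insert (B.erase a) (σ.erase B) := by
          conv_lhs => rw [← Finset.insert_erase hB]
          rw [Finset.image_insert]
          congr 1
          exact image_erase_id
            (fun X hX => hnoa2 X (Finset.mem_of_mem_erase hX) (Finset.ne_of_mem_erase hX))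
        have hBea : B.erase a ∉ σ := by
          intro h
          have hne' : B.erase a ≠ B := by
            intro h'
            rw [← h'] at haB
            exact (Finset.notMem_erase a B) haB
          have hdisj := hdis (B.erase a) h B hB hne'
          obtain ⟨x, hx⟩ := Finset.nonempty_iff_ne_empty.mpr hBerase
          exact (Finset.disjoint_left.mp hdisj hx) (Finset.mem_of_mem_erase hx)
        have hnoemp : (∅ : Finset α) ∉ insert (B.erase a) (σ.erase B) := by
          rw [Finset.mem_insert]
          rintro (h | h)
          · exact hBerase h.symm
          · exact hempty (Finset.mem_of_mem_erase h)
        have hja : jmap ⟨insert (B.erase a) (σ.erase B), B.erase a⟩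
            = insert (insert a (B.erase a)) ((insert (B.erase a) (σ.erase B)).erase (B.erase a)) := by
          simp only [hjmap, if_neg hBerase]
        rw [himg, Finset.erase_eq_of_notMem hnoemp, hja,
          Finset.erase_insert (fun h => hBea (Finset.mem_of_mem_erase h)),
          Finset.insert_erase haB, Finset.insert_erase hB]
    -- the bijection transfers the sum
    have hbij : ∑ p ∈ Sg, ((-1:R)^((jmap p).card - 1) * ((jmap p).card - 1).factorial)
        = ∑ σ ∈ setPartitions S, ((-1:R)^(σ.card-1) * (σ.card-1).factorial) :=
      Finset.sum_nbij' jmap imap hj hi left_inv right_inv (fun p _ => rfl)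
    rw [← hbij, hSg, Finset.sum_sigma]
    apply Finset.sum_eq_zero
    intro σ' hσ'
    have hempty : (∅ : Finset α) ∉ σ' := empty_not_mem_setPartitions hσ'
    have haσ' : ({a} : Finset α) ∉ σ' := fun h => (hnoa σ' hσ' {a} h) (by simp)
    have hpos : 0 < σ'.card :=
      Finset.card_pos.mpr (setPartitions_nonempty hS'ne hσ')
    obtain ⟨k, hk⟩ : ∃ k, σ'.card = k + 1 := ⟨σ'.card - 1, by omega⟩
    have hcard0 : (jmap ⟨σ', ∅⟩).card = σ'.card + 1 := by
      simp only [hjmap, if_pos rfl]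
      exact Finset.card_insert_of_notMem haσ'
    have hcardC : ∀ C ∈ σ', (jmap ⟨σ', C⟩).card = σ'.card := by
      intro C hC
      have hCne : C ≠ ∅ := Finset.nonempty_iff_ne_empty.mp (block_nonempty hσ' hC)
      simp only [hjmap, if_neg hCne]
      have hnotmem : insert a C ∉ σ'.erase C := by
        intro h
        exact (hnoa σ' hσ' (insert a C) (Finset.mem_of_mem_erase h)) (Finset.mem_insert_self a C)
      rw [Finset.card_insert_of_notMem hnotmem, Finset.card_erase_of_mem hC]
      omega
    rw [Finset.sum_insert hempty, hcard0,
      Finset.sum_congr rfl (fun C hC => by rw [hcardC C hC]),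
      Finset.sum_const, nsmul_eq_mul, hk]
    simp only [Nat.add_sub_cancel]
    rw [Nat.factorial_succ]
    push_cast
    ring
end Key

section USet
variable {α : Type*} [DecidableEq α]

/-- `σ` is a "partition of the partition `P`": its elements are partitions of the
blocks of `P`, one for each block. -/
def Good (P : Finset (Finset α)) (σ : Finset (Finset (Finset α))) : Prop :=
  σ.image (fun b => b.sup id) = P ∧
    (∀ b ∈ σ, b ∈ setPartitions (b.sup id)) ∧
    (∀ b ∈ σ, ∀ b' ∈ σ, b ≠ b' → Disjoint (b.sup id) (b'.sup id))

open scoped Classical in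
noncomputable def USet (P : Finset (Finset α)) : Finset (Finset (Finset (Finset α))) :=
  ((P.sup id).powerset.powerset).powerset.filter (fun σ => Good P σ)

lemma mem_USet {P : Finset (Finset α)} {σ : Finset (Finset (Finset α))} :
    σ ∈ USet P ↔ Good P σ := by
  classical
  constructor
  · exact fun h => (Finset.mem_filter.mp h).2
  · intro h
    refine Finset.mem_filter.mpr ⟨?_, h⟩
    rw [Finset.mem_powerset]
    intro b hb
    rw [Finset.mem_powerset]
    intro B hB
    rw [Finset.mem_powerset]
    have h1 : B ⊆ b.sup id := Finset.le_sup (f := id) hB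
    have h2 : b.sup id ∈ P := by
      rw [← h.1]; exact Finset.mem_image_of_mem _ hb
    exact h1.trans (Finset.le_sup (f := id) h2)

lemma USet_empty : USet (∅ : Finset (Finset α)) = {∅} := by
  ext σ
  rw [Finset.mem_singleton]
  constructor
  · intro hσ
    have := (mem_USet.mp hσ).1
    rwa [Finset.image_eq_empty] at this
  · rintro rfl
    exact mem_USet.mpr ⟨by simp, by simp, by simp⟩

lemma USet_card {P : Finset (Finset α)} {σ : Finset (Finset (Finset α))}
    (hP : ∀ X ∈ P, X.Nonempty) (hσ : σ ∈ USet P) : σ.card = P.card := by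
  obtain ⟨himg, hpart, hdis⟩ := mem_USet.mp hσ
  rw [← himg]
  refine (Finset.card_image_of_injOn ?_).symm
  intro b hb b' hb' heq
  dsimp only at heq
  by_contra hne
  have hd := hdis b hb b' hb' hne
  rw [heq] at hd
  have hXne : (b'.sup id).Nonempty :=
    hP _ (by rw [← himg]; exact Finset.mem_image_of_mem _ hb')
  rw [disjoint_self] at hd
  exact absurd hd hXne.ne_empty

lemma sup_sup (σ : Finset (Finset (Finset α))) :
    (σ.sup id).sup id = σ.sup (fun b => b.sup id) := by
  ext x
  simp only [Finset.mem_sup, id]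
  tauto

lemma sup_image_sup (σ : Finset (Finset (Finset α))) :
    (σ.image (fun b => b.sup id)).sup id = σ.sup (fun b => b.sup id) := by
  rw [Finset.sup_image]
  rfl

lemma prod_expand {R : Type*} [CommRing R] (h : Finset α → R) (P : Finset (Finset α)) :
    (∀ X ∈ P, X.Nonempty) → (∀ X ∈ P, ∀ X' ∈ P, X ≠ X' → Disjoint X X') →
    ∏ X ∈ P, (∑ Q ∈ setPartitions X, ∏ B ∈ Q, h B) =
      ∑ σ ∈ USet P, ∏ B ∈ σ.sup id, h B := by
  classical
  induction P using Finset.induction_on with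
  | empty =>
    intro _ _
    rw [USet_empty]
    simp
  | @insert X P' hXP' IH =>
    intro hne hdis
    have hne' : ∀ Z ∈ P', Z.Nonempty := fun Z hZ => hne Z (Finset.mem_insert_of_mem hZ)
    have hdis' : ∀ Z ∈ P', ∀ Z' ∈ P', Z ≠ Z' → Disjoint Z Z' := fun Z hZ Z' hZ' hzz =>
      hdis Z (Finset.mem_insert_of_mem hZ) Z' (Finset.mem_insert_of_mem hZ') hzz
    have hXne : X.Nonempty := hne X (Finset.mem_insert_self _ _)
    have hXdis : ∀ Z ∈ P', Disjoint X Z := fun Z hZ =>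
      hdis X (Finset.mem_insert_self _ _) Z (Finset.mem_insert_of_mem hZ)
        (fun hh => hXP' (hh ▸ hZ))
    rw [Finset.prod_insert hXP', IH hne' hdis', Finset.sum_mul_sum, ← Finset.sum_product']
    -- facts about elements of USet P'
    have hsupP' : ∀ σ' ∈ USet P', ∀ b ∈ σ', b.sup id ∈ P' := by
      intro σ' hσ' b hb
      rw [← (mem_USet.mp hσ').1]
      exact Finset.mem_image_of_mem _ hb
    set ch : Finset (Finset (Finset α)) → Finset (Finset α) :=
      fun σ => (σ.filter (fun b => b.sup id = X)).sup id with hch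
    apply Finset.sum_nbij' (i := fun p => insert p.1 p.2)
      (j := fun σ => (ch σ, σ.erase (ch σ)))
    · -- hi
      rintro ⟨Q, σ'⟩ hp
      rw [Finset.mem_product] at hp
      obtain ⟨hQ, hσ'⟩ := hp
      dsimp only at hQ hσ' ⊢
      obtain ⟨himg, hpart, hdsup⟩ := mem_USet.mp hσ'
      have hQsup : Q.sup id = X := (mem_setPartitions.mp hQ).2.2
      refine mem_USet.mpr ⟨?_, ?_, ?_⟩
      · rw [Finset.image_insert, hQsup, himg]
      · intro b hb
        rcases Finset.mem_insert.mp hb with rfl | hb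
        · rw [hQsup]; exact hQ
        · exact hpart b hb
      · intro b hb b' hb' hbb
        rcases Finset.mem_insert.mp hb with hh | hh
        · rcases Finset.mem_insert.mp hb' with hh' | hh'
          · exact absurd (hh.trans hh'.symm) hbb
          · subst hh
            rw [hQsup]
            exact hXdis _ (hsupP' σ' hσ' b' hh')
        · rcases Finset.mem_insert.mp hb' with hh' | hh'
          · subst hh'
            rw [hQsup]
            exact (hXdis _ (hsupP' σ' hσ' b hh)).symm
          · exact hdsup b hh b' hh' hbb
    · -- hj
      intro σ hσ
      obtain ⟨himg, hpart, hdsup⟩ := mem_USet.mp hσ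
      have hex : ∃ b₀ ∈ σ, b₀.sup id = X := by
        have : X ∈ σ.image (fun b => b.sup id) := by
          rw [himg]; exact Finset.mem_insert_self _ _
        rwa [Finset.mem_image] at this
      obtain ⟨b₀, hb₀, hb₀sup⟩ := hex
      have huniq : ∀ b ∈ σ, b.sup id = X → b = b₀ := by
        intro b hb hbsup
        by_contra hbb
        have hd := hdsup b hb b₀ hb₀ hbb
        rw [hbsup, hb₀sup, disjoint_self] at hd
        exact absurd hd hXne.ne_empty
      have hfil : σ.filter (fun b => b.sup id = X) = {b₀} :=
        filter_eq_singleton (p := fun (b : Finset (Finset α)) => b.sup id = X) hb₀ hb₀sup huniq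
      have hch0 : ch σ = b₀ := by rw [hch]; dsimp only; rw [hfil, Finset.sup_singleton]; rfl
      rw [Finset.mem_product]
      constructor
      · dsimp only
        rw [hch0, ← hb₀sup]
        exact hpart b₀ hb₀
      · dsimp only
        rw [hch0]
        refine mem_USet.mpr ⟨?_, ?_, ?_⟩
        · ext Z
          rw [Finset.mem_image]
          constructor
          · rintro ⟨b, hb, rfl⟩
            have hbσ := Finset.mem_of_mem_erase hb
            have : b.sup id ∈ insert X P' := by
              rw [← himg]; exact Finset.mem_image_of_mem _ hbσ
            rcases Finset.mem_insert.mp this with hh | hh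
            · exact absurd (huniq b hbσ hh) (Finset.ne_of_mem_erase hb)
            · exact hh
          · intro hZ
            have : Z ∈ σ.image (fun b => b.sup id) := by
              rw [himg]; exact Finset.mem_insert_of_mem hZ
            rw [Finset.mem_image] at this
            obtain ⟨b, hb, rfl⟩ := this
            have hbne : b ≠ b₀ := by
              rintro rfl
              rw [hb₀sup] at hZ
              exact hXP' hZ
            exact ⟨b, Finset.mem_erase.mpr ⟨hbne, hb⟩, rfl⟩
        · exact fun b hb => hpart b (Finset.mem_of_mem_erase hb)
        · exact fun b hb b' hb' hbb =>
            hdsup b (Finset.mem_of_mem_erase hb) b' (Finset.mem_of_mem_erase hb') hbb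
    · -- left_inv
      rintro ⟨Q, σ'⟩ hp
      rw [Finset.mem_product] at hp
      obtain ⟨hQ, hσ'⟩ := hp
      dsimp only at hQ hσ' ⊢
      have hQsup : Q.sup id = X := (mem_setPartitions.mp hQ).2.2
      have hQnotin : Q ∉ σ' := by
        intro hh
        exact hXP' (hQsup ▸ hsupP' σ' hσ' Q hh)
      have hfil : (insert Q σ').filter (fun b => b.sup id = X) = {Q} := by
        apply filter_eq_singleton (p := fun (b : Finset (Finset α)) => b.sup id = X)
          (Finset.mem_insert_self _ _) hQsup
        intro b hb hbsup
        rcases Finset.mem_insert.mp hb with h | h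
        · exact h
        · exact absurd (hbsup ▸ hsupP' σ' hσ' b h) hXP'
      have hch0 : ch (insert Q σ') = Q := by
        rw [hch]; dsimp only; rw [hfil, Finset.sup_singleton]; rfl
      rw [Prod.mk.injEq]
      refine ⟨hch0, ?_⟩
      rw [hch0]
      exact Finset.erase_insert hQnotin
    · -- right_inv
      intro σ hσ
      obtain ⟨himg, hpart, hdsup⟩ := mem_USet.mp hσ
      have hex : ∃ b₀ ∈ σ, b₀.sup id = X := by
        have : X ∈ σ.image (fun b => b.sup id) := by
          rw [himg]; exact Finset.mem_insert_self _ _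
        rwa [Finset.mem_image] at this
      obtain ⟨b₀, hb₀, hb₀sup⟩ := hex
      have huniq : ∀ b ∈ σ, b.sup id = X → b = b₀ := by
        intro b hb hbsup
        by_contra hbb
        have hd := hdsup b hb b₀ hb₀ hbb
        rw [hbsup, hb₀sup, disjoint_self] at hd
        exact absurd hd hXne.ne_empty
      have hfil : σ.filter (fun b => b.sup id = X) = {b₀} :=
        filter_eq_singleton (p := fun (b : Finset (Finset α)) => b.sup id = X) hb₀ hb₀sup huniq
      have hch0 : ch σ = b₀ := by rw [hch]; dsimp only; rw [hfil, Finset.sup_singleton]; rfl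
      dsimp only
      rw [hch0]
      exact Finset.insert_erase hb₀
    · -- summand equality
      rintro ⟨Q, σ'⟩ hp
      rw [Finset.mem_product] at hp
      obtain ⟨hQ, hσ'⟩ := hp
      dsimp only at hQ hσ' ⊢
      have hQsup : Q.sup id = X := (mem_setPartitions.mp hQ).2.2
      have hdisj : Disjoint Q (σ'.sup id) := by
        rw [Finset.disjoint_left]
        intro B hBQ hBσ'
        rw [Finset.mem_sup] at hBσ'
        obtain ⟨b, hb, hBb⟩ := hBσ'
        have h1 : B ⊆ X := by
          rw [← hQsup]; exact Finset.le_sup (f := id) hBQ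
        have h2 : B ⊆ b.sup id := Finset.le_sup (f := id) hBb
        have h3 : Disjoint X (b.sup id) := hXdis _ (hsupP' σ' hσ' b hb)
        have hBne : B.Nonempty := block_nonempty hQ hBQ
        obtain ⟨x, hx⟩ := hBne
        exact (Finset.disjoint_left.mp h3 (h1 hx)) (h2 hx)
      rw [Finset.sup_insert, show id Q = Q from rfl, Finset.sup_eq_union,
        Finset.prod_union hdisj]

lemma USet_to_part {Y : Finset α} {P : Finset (Finset α)} {σ : Finset (Finset (Finset α))}
    (hP : P ∈ setPartitions Y) (hσ : σ ∈ USet P) :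
    σ.sup id ∈ setPartitions Y ∧ σ ∈ setPartitions (σ.sup id) := by
  obtain ⟨himg, hpart, hdsup⟩ := mem_USet.mp hσ
  obtain ⟨hPne, hPdis, hPsup⟩ := mem_setPartitions.mp hP
  constructor
  · refine mem_setPartitions.mpr ⟨?_, ?_, ?_⟩
    · intro B hB
      rw [Finset.mem_sup] at hB
      obtain ⟨b, hb, hBb⟩ := hB
      exact block_nonempty (hpart b hb) hBb
    · intro B hB B' hB' hne
      rw [Finset.mem_sup] at hB hB'
      obtain ⟨b, hb, hBb⟩ := hB
      obtain ⟨b', hb', hBb'⟩ := hB'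
      by_cases hbb : b = b'
      · subst hbb
        exact (mem_setPartitions.mp (hpart b hb)).2.1 B hBb B' hBb' hne
      · have hd := hdsup b hb b' hb' hbb
        exact Finset.disjoint_of_subset_left (Finset.le_sup (f := id) hBb)
          (Finset.disjoint_of_subset_right (Finset.le_sup (f := id) hBb') hd)
    · rw [sup_sup, ← sup_image_sup, himg, hPsup]
  · refine mem_setPartitions.mpr ⟨?_, ?_, ?_⟩
    · intro b hb
      rw [Finset.nonempty_iff_ne_empty]
      rintro rfl
      have : (∅ : Finset (Finset α)).sup id ∈ P := by
        rw [← himg]; exact Finset.mem_image_of_mem _ hb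
      rw [Finset.sup_empty] at this
      exact absurd (hPne _ this) (by simp)
    · intro b hb b' hb' hbb
      rw [Finset.disjoint_left]
      intro B hBb hBb'
      have hd := hdsup b hb b' hb' hbb
      have hBne : B.Nonempty := block_nonempty (hpart b hb) hBb
      obtain ⟨x, hx⟩ := hBne
      have h1 : x ∈ b.sup id := Finset.le_sup (f := id) hBb hx
      have h2 : x ∈ b'.sup id := Finset.le_sup (f := id) hBb' hx
      exact (Finset.disjoint_left.mp hd h1) h2
    · rfl

lemma part_to_USet {Y : Finset α} {Q : Finset (Finset α)} {σ : Finset (Finset (Finset α))}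
    (hQ : Q ∈ setPartitions Y) (hσ : σ ∈ setPartitions Q) :
    σ.image (fun b => b.sup id) ∈ setPartitions Y ∧
      σ ∈ USet (σ.image fun b => b.sup id) := by
  obtain ⟨hQne, hQdis, hQsup⟩ := mem_setPartitions.mp hQ
  obtain ⟨hσne, hσdis, hσsup⟩ := mem_setPartitions.mp hσ
  have hbQ : ∀ b ∈ σ, ∀ B ∈ b, B ∈ Q := by
    intro b hb B hB
    have : B ∈ σ.sup id := Finset.le_sup (f := id) hb hB
    rwa [hσsup] at this
  have hsupdis : ∀ b ∈ σ, ∀ b' ∈ σ, b ≠ b' → Disjoint (b.sup id) (b'.sup id) := by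
    intro b hb b' hb' hbb
    rw [Finset.disjoint_left]
    intro x hx hx'
    rw [Finset.mem_sup] at hx hx'
    obtain ⟨B, hBb, hxB⟩ := hx
    obtain ⟨B', hBb', hxB'⟩ := hx'
    by_cases hBB : B = B'
    · subst hBB
      exact (Finset.disjoint_left.mp (hσdis b hb b' hb' hbb) hBb) hBb'
    · exact (Finset.disjoint_left.mp
        (hQdis B (hbQ b hb B hBb) B' (hbQ b' hb' B' hBb') hBB) hxB) hxB'
  have hgood : Good (σ.image fun b => b.sup id) σ := by
    refine ⟨rfl, ?_, hsupdis⟩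
    intro b hb
    refine mem_setPartitions.mpr ⟨?_, ?_, rfl⟩
    · exact fun B hB => hQne B (hbQ b hb B hB)
    · exact fun B hB B' hB' hne => hQdis B (hbQ b hb B hB) B' (hbQ b hb B' hB') hne
  constructor
  · refine mem_setPartitions.mpr ⟨?_, ?_, ?_⟩
    · intro Z hZ
      rw [Finset.mem_image] at hZ
      obtain ⟨b, hb, rfl⟩ := hZ
      obtain ⟨B, hB⟩ := hσne b hb
      obtain ⟨x, hx⟩ := hQne B (hbQ b hb B hB)
      exact ⟨x, Finset.le_sup (f := id) hB hx⟩
    · intro Z hZ Z' hZ' hne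
      rw [Finset.mem_image] at hZ hZ'
      obtain ⟨b, hb, rfl⟩ := hZ
      obtain ⟨b', hb', rfl⟩ := hZ'
      exact hsupdis b hb b' hb' (fun hh => hne (by rw [hh]))
    · rw [sup_image_sup, ← sup_sup, hσsup, hQsup]
  · exact mem_USet.mpr hgood


lemma biUnion_USet_eq {Y : Finset α} :
    (setPartitions Y).biUnion USet = (setPartitions Y).biUnion (fun Q => setPartitions Q) := by
  ext σ
  rw [Finset.mem_biUnion, Finset.mem_biUnion]
  constructor
  · rintro ⟨P, hP, hσ⟩
    obtain ⟨h1, h2⟩ := USet_to_part hP hσ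
    exact ⟨_, h1, h2⟩
  · rintro ⟨Q, hQ, hσ⟩
    obtain ⟨h1, h2⟩ := part_to_USet hQ hσ
    exact ⟨_, h1, h2⟩

end USet

/-- The partition-sum exponential `Exp_∗(h)(Y) = δ_{Y,∅} + ∑_{P partition of Y} ∏_{X∈P} h(X)`
(the Kronecker delta term coincides with the contribution of the empty partition of `∅`). -/
noncomputable def ExpStar {R : Type*} [CommRing R] (h : Finset ℕ → R) (Y : Finset ℕ) : R :=
  ∑ P ∈ setPartitions Y, ∏ X ∈ P, h X

open scoped Classical in
/-- The Möbius-type logarithm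
`Ln_∗(𝕀 + h')(Y) = ∑_{P partition of Y, |P| ≥ 1} (-1)^{|P|-1} (|P|-1)! ∏_{X∈P} h'(X)`,
taking as input the full sequence `g = 𝕀 + h'`, so that the blocks are evaluated at
`h' = g - 𝕀`. -/
noncomputable def LnStar {R : Type*} [CommRing R] (g : Finset ℕ → R) (Y : Finset ℕ) : R :=
  ∑ P ∈ (setPartitions Y).filter (fun P => P.Nonempty),
    (-1 : R) ^ (P.card - 1) * (P.card - 1).factorial *
      ∏ X ∈ P, (g X - if X = ∅ then 1 else 0)

set_option maxHeartbeats 1000000 in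
/-- The partition-sum exponential and the Möbius-type logarithm are mutually inverse:
`Ln_∗(Exp_∗(h)) = h` for every `h` with `h(∅) = 0`, for functions valued in a
commutative `ℚ`-algebra. -/
theorem lnStar_expStar {R : Type*} [CommRing R] [Algebra ℚ R]
    (h : Finset ℕ → R) (h0 : h ∅ = 0) :
    ∀ Y : Finset ℕ, LnStar (ExpStar h) Y = h Y := by
  classical
  intro Y
  rcases Finset.eq_empty_or_nonempty Y with rfl | hY
  · rw [LnStar, setPartitions_empty, h0]
    rw [Finset.filter_singleton]
    simp
  · rw [LnStar]
    rw [Finset.filter_true_of_mem (fun P hP => setPartitions_nonempty hY hP)]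
    have step1 : ∀ P ∈ setPartitions Y,
        (-1 : R) ^ (P.card - 1) * (P.card - 1).factorial *
            ∏ X ∈ P, (ExpStar h X - if X = ∅ then 1 else 0)
          = ∑ σ ∈ USet P,
              (-1 : R) ^ (σ.card - 1) * (σ.card - 1).factorial *
                ∏ B ∈ σ.sup id, h B := by
      intro P hP
      have hprod : ∏ X ∈ P, (ExpStar h X - if X = ∅ then 1 else 0)
          = ∑ σ ∈ USet P, ∏ B ∈ σ.sup id, h B := by
        rw [Finset.prod_congr rfl (fun X hX => by
          rw [if_neg (Finset.nonempty_iff_ne_empty.mp (block_nonempty hP hX)), sub_zero])]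
        exact prod_expand h P (mem_setPartitions.mp hP).1 (mem_setPartitions.mp hP).2.1
      rw [hprod, Finset.mul_sum]
      apply Finset.sum_congr rfl
      intro σ hσ
      rw [← USet_card (mem_setPartitions.mp hP).1 hσ]
    rw [Finset.sum_congr rfl step1]
    have hdisjU : (↑(setPartitions Y) : Set (Finset (Finset ℕ))).PairwiseDisjoint USet := by
      intro P hP P' hP' hne
      rw [Function.onFun_apply, Finset.disjoint_left]
      intro σ hσ hσ'
      exact hne (((mem_USet.mp hσ).1).symm.trans ((mem_USet.mp hσ').1))
    rw [← Finset.sum_biUnion hdisjU]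
    have hbiU : (setPartitions Y).biUnion USet
        = (setPartitions Y).biUnion (fun Q => setPartitions Q) := by
      ext σ
      rw [Finset.mem_biUnion, Finset.mem_biUnion]
      constructor
      · rintro ⟨P, hP, hσ⟩
        obtain ⟨h1, h2⟩ := USet_to_part hP hσ
        exact ⟨_, h1, h2⟩
      · rintro ⟨Q, hQ, hσ⟩
        obtain ⟨h1, h2⟩ := part_to_USet hQ hσ
        exact ⟨_, h1, h2⟩
    rw [hbiU]
    have hdisjSP : (↑(setPartitions Y) : Set (Finset (Finset ℕ))).PairwiseDisjoint
        (fun Q => setPartitions Q) := by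
      intro Q hQ Q' hQ' hne
      rw [Function.onFun_apply, Finset.disjoint_left]
      intro σ hσ hσ'
      exact hne (((mem_setPartitions.mp hσ).2.2).symm.trans ((mem_setPartitions.mp hσ').2.2))
    rw [Finset.sum_biUnion hdisjSP]
    have step3 : ∀ Q ∈ setPartitions Y,
        (∑ σ ∈ setPartitions Q,
          (-1 : R) ^ (σ.card - 1) * (σ.card - 1).factorial * ∏ B ∈ σ.sup id, h B)
        = (if Q.card = 1 then (1 : R) else 0) * ∏ B ∈ Q, h B := by
      intro Q hQ
      have hQne : Q.Nonempty := setPartitions_nonempty hY hQ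
      rw [Finset.sum_congr rfl (fun σ hσ => by
        rw [(mem_setPartitions.mp hσ).2.2])]
      rw [← Finset.sum_mul, key_identity Q hQne]
    rw [Finset.sum_congr rfl step3]
    rw [Finset.sum_eq_single ({Y} : Finset (Finset ℕ))]
    · rw [if_pos (Finset.card_singleton Y), Finset.prod_singleton, one_mul]
    · intro Q hQ hne
      rw [if_neg, zero_mul]
      intro h1
      exact hne (eq_singleton_of_card_eq_one hQ h1)
    · intro habs
      exact absurd (singleton_mem_setPartitions hY) habs
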